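/- For every polynomial f ∈ P one has ∂(n)( x_1^{n-1} x_2^{n-2} ⋯ x_{n-1} · ∂(n)(f) ) = ∂(n)(f); equivalently, as operators on P, ∂(n) ∘ e_n = ∂(n), where e_n is the composite of ∂(n) followed by multiplication by x_1^{n-1} x_2^{n-2} ⋯ x_{n-1}. -/

import Mathlib

noncomputable section

open MvPolynomial

/-- The reduced word (s_1)(s_2 s_1)(s_3 s_2 s_1)⋯(s_{n-1}⋯s_1) of the longest element of
the symmetric group S_n, written 0-indexed (the simple transposition s_{k+1} corresponds
to the index k). -/
def nilWord (n : ℕ) : List ℕ :=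
  (List.range (n - 1)).flatMap fun t => (List.range (t + 1)).reverse

/-- The composite ∂(n) = ∂_{i_1} ∘ ⋯ ∘ ∂_{i_N} of the divided difference operators D
along the reduced word (s_1)(s_2 s_1)⋯(s_{n-1}⋯s_1) of the longest element of S_n. -/
def longOp {n : ℕ} (D : ℕ → MvPolynomial (Fin n) ℤ →ₗ[ℤ] MvPolynomial (Fin n) ℤ) :
    MvPolynomial (Fin n) ℤ →ₗ[ℤ] MvPolynomial (Fin n) ℤ :=
  (nilWord n).foldr (fun k acc => (D k).comp acc) LinearMap.id

/-- The staircase monomial x_1^{n-1} x_2^{n-2} ⋯ x_{n-1} (variables 0-indexed). -/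
def staircase (n : ℕ) : MvPolynomial (Fin n) ℤ :=
  ∏ i : Fin n, X i ^ (n - 1 - (i : ℕ))

/-- D k is, for each k with k+1 ≤ n-1 (0-indexed: k+1 < n), the divided difference
operator ∂_{k+1}, uniquely determined by (x_{k+1} - x_{k+2})·∂_{k+1}(f) = f - s_{k+1}(f). -/
def IsDDiff {n : ℕ} (D : ℕ → MvPolynomial (Fin n) ℤ →ₗ[ℤ] MvPolynomial (Fin n) ℤ) : Prop :=
  ∀ (k : ℕ) (hk : k + 1 < n) (f : MvPolynomial (Fin n) ℤ),
    (X (⟨k, Nat.lt_of_succ_lt hk⟩ : Fin n) - X ⟨k + 1, hk⟩) * D k f =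
      f - rename (Equiv.swap (⟨k, Nat.lt_of_succ_lt hk⟩ : Fin n) ⟨k + 1, hk⟩) f

namespace DDAux

variable {n : ℕ}

abbrev P (n : ℕ) := MvPolynomial (Fin n) ℤ

/-- the swap automorphism as a plain function on polynomials -/
def sw (k : ℕ) (hk : k + 1 < n) : P n → P n :=
  rename (Equiv.swap (⟨k, Nat.lt_of_succ_lt hk⟩ : Fin n) ⟨k + 1, hk⟩)

lemma sw_sw (k : ℕ) (hk : k + 1 < n) (f : P n) : sw k hk (sw k hk f) = f := by
  unfold sw
  rw [rename_rename]
  have : (⇑(Equiv.swap (⟨k, Nat.lt_of_succ_lt hk⟩ : Fin n) ⟨k + 1, hk⟩) ∘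
      ⇑(Equiv.swap (⟨k, Nat.lt_of_succ_lt hk⟩ : Fin n) ⟨k + 1, hk⟩)) = id := by
    funext x; simp
  rw [this, rename_id, AlgHom.id_apply]

lemma sw_mul (k : ℕ) (hk : k + 1 < n) (f g : P n) :
    sw k hk (f * g) = sw k hk f * sw k hk g := map_mul _ _ _

lemma sw_sub (k : ℕ) (hk : k + 1 < n) (f g : P n) :
    sw k hk (f - g) = sw k hk f - sw k hk g := map_sub _ _ _

lemma X_sub_ne (a b : Fin n) (h : a ≠ b) : (X a - X b : P n) ≠ 0 := by
  intro he
  rw [sub_eq_zero] at he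
  exact h (MvPolynomial.X_injective he)

lemma fin_ne (k : ℕ) (hk : k + 1 < n) :
    (⟨k, Nat.lt_of_succ_lt hk⟩ : Fin n) ≠ ⟨k + 1, hk⟩ := by
  simp [Fin.ext_iff]

lemma sw_X_left (k : ℕ) (hk : k + 1 < n) :
    sw k hk (X (⟨k, Nat.lt_of_succ_lt hk⟩ : Fin n)) = X ⟨k + 1, hk⟩ := by
  unfold sw; rw [rename_X, Equiv.swap_apply_left]

lemma sw_X_right (k : ℕ) (hk : k + 1 < n) :
    sw k hk (X (⟨k + 1, hk⟩ : Fin n)) = X ⟨k, Nat.lt_of_succ_lt hk⟩ := by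
  unfold sw; rw [rename_X, Equiv.swap_apply_right]

lemma sw_X_other (k : ℕ) (hk : k + 1 < n) (i : Fin n) (h1 : (i : ℕ) ≠ k)
    (h2 : (i : ℕ) ≠ k + 1) : sw k hk (X i) = X i := by
  unfold sw
  rw [rename_X, Equiv.swap_apply_of_ne_of_ne]
  · simp [Fin.ext_iff, h1]
  · simp [Fin.ext_iff, h2]

def Far (j k : ℕ) : Prop := j + 2 ≤ k ∨ k + 2 ≤ j

lemma sw_comm_far (j k : ℕ) (hj : j + 1 < n) (hk : k + 1 < n) (h : Far j k) (f : P n) :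
    sw j hj (sw k hk f) = sw k hk (sw j hj f) := by
  unfold sw
  rw [rename_rename, rename_rename]
  have he : (⇑(Equiv.swap (⟨j, Nat.lt_of_succ_lt hj⟩ : Fin n) ⟨j + 1, hj⟩) ∘
        ⇑(Equiv.swap (⟨k, Nat.lt_of_succ_lt hk⟩ : Fin n) ⟨k + 1, hk⟩)) =
      (⇑(Equiv.swap (⟨k, Nat.lt_of_succ_lt hk⟩ : Fin n) ⟨k + 1, hk⟩) ∘
        ⇑(Equiv.swap (⟨j, Nat.lt_of_succ_lt hj⟩ : Fin n) ⟨j + 1, hj⟩)) := by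
    funext x
    simp only [Function.comp_apply, Equiv.swap_apply_def, Fin.ext_iff]
    unfold Far at h
    split_ifs <;> simp only [Fin.ext_iff, Fin.val_mk] at * <;> omega
  rw [he]

lemma sw_alpha_far (j k : ℕ) (hj : j + 1 < n) (hk : k + 1 < n) (h : Far j k) :
    sw j hj (X (⟨k, Nat.lt_of_succ_lt hk⟩ : Fin n) - X ⟨k + 1, hk⟩)
      = X (⟨k, Nat.lt_of_succ_lt hk⟩ : Fin n) - X ⟨k + 1, hk⟩ := by
  have e1 : (((⟨k, Nat.lt_of_succ_lt hk⟩ : Fin n)) : ℕ) ≠ j := by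
    simp only [Fin.val_mk]; unfold Far at h; omega
  have e2 : (((⟨k, Nat.lt_of_succ_lt hk⟩ : Fin n)) : ℕ) ≠ j + 1 := by
    simp only [Fin.val_mk]; unfold Far at h; omega
  have e3 : (((⟨k + 1, hk⟩ : Fin n)) : ℕ) ≠ j := by
    simp only [Fin.val_mk]; unfold Far at h; omega
  have e4 : (((⟨k + 1, hk⟩ : Fin n)) : ℕ) ≠ j + 1 := by
    simp only [Fin.val_mk]; unfold Far at h; omega
  rw [sw_sub, sw_X_other j hj _ e1 e2, sw_X_other j hj _ e3 e4]



section Pairs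
variable (k : ℕ) (hk1 : k + 1 < n) (hk2 : k + 2 < n)

lemma sw_pair1 : sw k hk1 (X (⟨k + 1, Nat.lt_of_succ_lt hk2⟩ : Fin n) - X ⟨k + 2, hk2⟩)
    = X (⟨k, Nat.lt_of_succ_lt hk1⟩ : Fin n) - X ⟨k + 2, hk2⟩ := by
  rw [sw_sub, sw_X_right k hk1, sw_X_other k hk1 _ (by simp only [Fin.val_mk]; omega) (by simp only [Fin.val_mk]; omega)]

lemma sw_pair2 : sw (k + 1) hk2 (X (⟨k, Nat.lt_of_succ_lt hk1⟩ : Fin n) - X ⟨k + 1, hk1⟩)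
    = X (⟨k, Nat.lt_of_succ_lt hk1⟩ : Fin n) - X ⟨k + 2, hk2⟩ := by
  rw [sw_sub, sw_X_left (k + 1) hk2, sw_X_other (k + 1) hk2 _ (by simp only [Fin.val_mk]; omega) (by simp only [Fin.val_mk]; omega)]

lemma sw_pair3 : sw k hk1 (X (⟨k, Nat.lt_of_succ_lt hk1⟩ : Fin n) - X ⟨k + 2, hk2⟩)
    = X (⟨k + 1, hk1⟩ : Fin n) - X ⟨k + 2, hk2⟩ := by
  rw [sw_sub, sw_X_left k hk1, sw_X_other k hk1 _ (by simp only [Fin.val_mk]; omega) (by simp only [Fin.val_mk]; omega)]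

lemma sw_pair4 : sw (k + 1) hk2 (X (⟨k, Nat.lt_of_succ_lt hk1⟩ : Fin n) - X ⟨k + 2, hk2⟩)
    = X (⟨k, Nat.lt_of_succ_lt hk1⟩ : Fin n) - X ⟨k + 1, hk1⟩ := by
  rw [sw_sub, sw_X_right (k + 1) hk2, sw_X_other (k + 1) hk2 _ (by simp only [Fin.val_mk]; omega) (by simp only [Fin.val_mk]; omega)]

lemma sw_braid (f : P n) :
    sw k hk1 (sw (k + 1) hk2 (sw k hk1 f)) = sw (k + 1) hk2 (sw k hk1 (sw (k + 1) hk2 f)) := by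
  unfold sw
  rw [rename_rename, rename_rename, rename_rename, rename_rename]
  set a : Fin n := ⟨k, Nat.lt_of_succ_lt hk1⟩ with ha
  set b : Fin n := ⟨k + 1, hk1⟩ with hb
  set b' : Fin n := ⟨k + 1, Nat.lt_of_succ_lt hk2⟩ with hb'
  set c : Fin n := ⟨k + 2, hk2⟩ with hc
  have hbb : b' = b := rfl
  have hab : a ≠ b := by exact fin_ne k hk1
  have hac : a ≠ c := by simp only [ne_eq, Fin.ext_iff, Fin.val_mk, ha, hc]; omega
  have hcb : c ≠ b := by exact (fin_ne (k + 1) hk2).symm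
  have hca : c ≠ a := hac.symm
  have hperm : Equiv.swap a b * Equiv.swap b c * Equiv.swap a b =
      Equiv.swap b c * Equiv.swap a b * Equiv.swap b c := by
    calc Equiv.swap a b * Equiv.swap b c * Equiv.swap a b
        = Equiv.swap b a * Equiv.swap c b * Equiv.swap b a := by
          rw [Equiv.swap_comm a b, Equiv.swap_comm b c]
      _ = Equiv.swap a c := Equiv.swap_mul_swap_mul_swap hcb hca
      _ = Equiv.swap c a := Equiv.swap_comm _ _
      _ = Equiv.swap b c * Equiv.swap a b * Equiv.swap b c :=
          (Equiv.swap_mul_swap_mul_swap hab hac).symm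
  have he : ((⇑(Equiv.swap a b) ∘ ⇑(Equiv.swap b c)) ∘ ⇑(Equiv.swap a b)) =
      ((⇑(Equiv.swap b c) ∘ ⇑(Equiv.swap a b)) ∘ ⇑(Equiv.swap b c)) := by
    funext x
    simp only [Function.comp_apply, ← Equiv.Perm.mul_apply]
    rw [← mul_assoc, ← mul_assoc, hperm]
  rw [he]

end Pairs

variable (D : ℕ → P n →ₗ[ℤ] P n) (hD : IsDDiff D)
include hD

lemma dd_rel (k : ℕ) (hk : k + 1 < n) (f : P n) :
    (X (⟨k, Nat.lt_of_succ_lt hk⟩ : Fin n) - X ⟨k + 1, hk⟩) * D k f = f - sw k hk f :=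
  hD k hk f

/-- uniqueness -/
lemma dd_eq (k : ℕ) (hk : k + 1 < n) (f u : P n)
    (h : (X (⟨k, Nat.lt_of_succ_lt hk⟩ : Fin n) - X ⟨k + 1, hk⟩) * u = f - sw k hk f) :
    D k f = u := by
  have h2 := dd_rel D hD k hk f
  rw [← h] at h2
  exact mul_left_cancel₀ (X_sub_ne _ _ (fin_ne k hk)) h2

lemma sw_D (k : ℕ) (hk : k + 1 < n) (f : P n) : sw k hk (D k f) = D k f := by
  have h1 := dd_rel D hD k hk f
  have h2 := congrArg (sw k hk) h1
  rw [sw_mul, sw_sub, sw_sub, sw_sw, sw_X_left, sw_X_right] at h2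
  have h3 : (X (⟨k, Nat.lt_of_succ_lt hk⟩ : Fin n) - X ⟨k + 1, hk⟩) * sw k hk (D k f)
      = (X (⟨k, Nat.lt_of_succ_lt hk⟩ : Fin n) - X ⟨k + 1, hk⟩) * D k f := by
    linear_combination -h2 - h1
  exact mul_left_cancel₀ (X_sub_ne _ _ (fin_ne k hk)) h3


lemma D_D (k : ℕ) (hk : k + 1 < n) (f : P n) : D k (D k f) = 0 := by
  apply dd_eq D hD k hk
  rw [mul_zero, sw_D D hD, sub_self]

lemma D_mul_symm (k : ℕ) (hk : k + 1 < n) (g f : P n) (hg : sw k hk g = g) :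
    D k (g * f) = g * D k f := by
  apply dd_eq D hD k hk
  have h1 := dd_rel D hD k hk f
  calc (X (⟨k, Nat.lt_of_succ_lt hk⟩ : Fin n) - X ⟨k + 1, hk⟩) * (g * D k f)
      = g * ((X (⟨k, Nat.lt_of_succ_lt hk⟩ : Fin n) - X ⟨k + 1, hk⟩) * D k f) := by ring
    _ = g * (f - sw k hk f) := by rw [h1]
    _ = g * f - sw k hk (g * f) := by rw [sw_mul, hg]; ring


lemma sw_D_far (j k : ℕ) (hj : j + 1 < n) (hk : k + 1 < n) (h : Far j k) (f : P n) :
    sw j hj (D k f) = D k (sw j hj f) := by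
  have h1 := congrArg (sw j hj) (dd_rel D hD k hk f)
  rw [sw_mul, sw_alpha_far j k hj hk h, sw_sub, sw_comm_far j k hj hk h] at h1
  exact (dd_eq D hD k hk _ _ h1).symm

lemma B1 (j k : ℕ) (hj : j + 1 < n) (hk : k + 1 < n) (h : Far j k) (f : P n) :
    D j (D k f) = D k (D j f) := by
  apply dd_eq D hD j hj
  calc (X (⟨j, Nat.lt_of_succ_lt hj⟩ : Fin n) - X ⟨j + 1, hj⟩) * D k (D j f)
      = D k ((X (⟨j, Nat.lt_of_succ_lt hj⟩ : Fin n) - X ⟨j + 1, hj⟩) * D j f) := by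
        rw [D_mul_symm D hD k hk]
        exact sw_alpha_far k j hk hj (by unfold Far at *; omega)
    _ = D k (f - sw j hj f) := by rw [dd_rel D hD j hj]
    _ = D k f - D k (sw j hj f) := map_sub _ _ _
    _ = D k f - sw j hj (D k f) := by rw [sw_D_far D hD j k hj hk h]


lemma B2 (k : ℕ) (hk2 : k + 2 < n) (f : P n) :
    D k (D (k + 1) (D k f)) = D (k + 1) (D k (D (k + 1) f)) := by
  have hk1 : k + 1 < n := Nat.lt_of_succ_lt hk2
  have e1 := dd_rel D hD k hk1 f
  have e2 := dd_rel D hD (k + 1) hk2 (D k f)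
  have e3 := dd_rel D hD k hk1 (D (k + 1) (D k f))
  have u1 := dd_rel D hD (k + 1) hk2 f
  have u2 := dd_rel D hD k hk1 (D (k + 1) f)
  have u3 := dd_rel D hD (k + 1) hk2 (D k (D (k + 1) f))
  have e1' := congrArg (sw (k + 1) hk2) e1
  rw [sw_mul, sw_pair2 k hk1 hk2, sw_sub] at e1'
  have e1'' := congrArg (sw k hk1) e1'
  rw [sw_mul, sw_pair3 k hk1 hk2, sw_sub] at e1''
  have e2' := congrArg (sw k hk1) e2
  rw [sw_mul, sw_pair1 k hk1 hk2, sw_sub, sw_D D hD k hk1] at e2'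
  have u1' := congrArg (sw k hk1) u1
  rw [sw_mul, sw_pair1 k hk1 hk2, sw_sub] at u1'
  have u1'' := congrArg (sw (k + 1) hk2) u1'
  rw [sw_mul, sw_pair4 k hk1 hk2, sw_sub] at u1''
  have u2' := congrArg (sw (k + 1) hk2) u2
  rw [sw_mul, sw_pair2 k hk1 hk2, sw_sub, sw_D D hD (k + 1) hk2] at u2'
  have br := sw_braid k hk1 hk2 f
  have hne : (X (⟨k, Nat.lt_of_succ_lt hk1⟩ : Fin n) - X (⟨k + 1, hk1⟩ : Fin n)) *
      ((X (⟨k + 1, Nat.lt_of_succ_lt hk2⟩ : Fin n) - X (⟨k + 2, hk2⟩ : Fin n)) *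
        (X (⟨k, Nat.lt_of_succ_lt hk1⟩ : Fin n) - X (⟨k + 2, hk2⟩ : Fin n)) : P n) ≠ 0 := by
    refine mul_ne_zero (X_sub_ne _ _ (fin_ne k hk1)) (mul_ne_zero
      (X_sub_ne _ _ (fin_ne (k + 1) hk2)) (X_sub_ne _ _ ?_))
    simp only [ne_eq, Fin.ext_iff, Fin.val_mk]; omega
  apply mul_left_cancel₀ hne
  linear_combination (X (⟨k + 1, Nat.lt_of_succ_lt hk2⟩ : Fin n) - X (⟨k + 2, hk2⟩ : Fin n)) *
      (X (⟨k, Nat.lt_of_succ_lt hk1⟩ : Fin n) - X (⟨k + 2, hk2⟩ : Fin n)) * e3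
    + (X (⟨k, Nat.lt_of_succ_lt hk1⟩ : Fin n) - X (⟨k + 2, hk2⟩ : Fin n)) * e2
    - (X (⟨k + 1, Nat.lt_of_succ_lt hk2⟩ : Fin n) - X (⟨k + 2, hk2⟩ : Fin n)) * e2'
    + e1 - e1' + e1''
    - (X (⟨k, Nat.lt_of_succ_lt hk1⟩ : Fin n) - X (⟨k + 1, hk1⟩ : Fin n)) *
      (X (⟨k, Nat.lt_of_succ_lt hk1⟩ : Fin n) - X (⟨k + 2, hk2⟩ : Fin n)) * u3
    - (X (⟨k, Nat.lt_of_succ_lt hk1⟩ : Fin n) - X (⟨k + 2, hk2⟩ : Fin n)) * u2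
    + (X (⟨k, Nat.lt_of_succ_lt hk1⟩ : Fin n) - X (⟨k + 1, hk1⟩ : Fin n)) * u2'
    - u1 + u1' - u1''
    - br


end DDAux

namespace DDAux

variable {n : ℕ} (D : ℕ → P n →ₗ[ℤ] P n)

/-- composite of D along a word -/
def ops (L : List ℕ) : P n →ₗ[ℤ] P n :=
  L.foldr (fun k acc => (D k).comp acc) LinearMap.id

lemma ops_nil : ops D [] = LinearMap.id := rfl

lemma ops_cons (k : ℕ) (L : List ℕ) : ops D (k :: L) = (D k).comp (ops D L) := rfl

lemma ops_cons_apply (k : ℕ) (L : List ℕ) (f : P n) :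
    ops D (k :: L) f = D k (ops D L f) := rfl

lemma ops_append_apply (L1 L2 : List ℕ) (f : P n) :
    ops D (L1 ++ L2) f = ops D L1 (ops D L2 f) := by
  induction L1 with
  | nil => rfl
  | cons a L ih => rw [List.cons_append, ops_cons_apply, ops_cons_apply, ih]

lemma longOp_eq : longOp D = ops D (nilWord n) := rfl

/-- the t-th block word [t, t-1, ..., 0] -/
def Tl (t : ℕ) : List ℕ := (List.range (t + 1)).reverse

lemma Tl_succ (t : ℕ) : Tl (t + 1) = (t + 1) :: Tl t := by
  simp [Tl, List.range_succ]

lemma mem_Tl {i t : ℕ} (h : i ∈ Tl t) : i ≤ t := by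
  simp only [Tl, List.mem_reverse, List.mem_range] at h; omega

/-- the word of the first t blocks -/
def Wl (t : ℕ) : List ℕ := (List.range t).flatMap fun s => (List.range (s + 1)).reverse

lemma Wl_succ (t : ℕ) : Wl (t + 1) = Wl t ++ Tl t := by
  simp [Wl, Tl, List.range_succ]

lemma mem_Wl {i t : ℕ} (h : i ∈ Wl t) : i < t := by
  simp only [Wl, List.mem_flatMap, List.mem_reverse, List.mem_range] at h
  obtain ⟨s, hs, hi⟩ := h; omega

lemma nilWord_eq_Wl : nilWord n = Wl (n - 1) := rfl

variable (hD : IsDDiff D)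
include hD

lemma D_comm_ops (j : ℕ) (hj : j + 1 < n) (L : List ℕ)
    (hL : ∀ i ∈ L, i + 1 < n ∧ Far j i) (f : P n) :
    D j (ops D L f) = ops D L (D j f) := by
  induction L with
  | nil => rfl
  | cons a L ih =>
    rw [ops_cons_apply, ops_cons_apply]
    obtain ⟨ha1, ha2⟩ := hL a List.mem_cons_self
    rw [B1 D hD j a hj ha1 ha2, ih (fun i hi => hL i (List.mem_cons_of_mem a hi))]

lemma C1_diag (t : ℕ) (ht : t + 2 < n) (f : P n) :
    D t (ops D (Tl (t + 1)) f) = ops D (Tl (t + 1)) (D (t + 1) f) := by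
  cases t with
  | zero =>
    rw [show Tl 1 = [1, 0] from rfl]
    exact B2 D hD 0 ht f
  | succ r =>
    rw [Tl_succ, Tl_succ, ops_cons_apply, ops_cons_apply, ops_cons_apply, ops_cons_apply]
    rw [B2 D hD (r + 1) ht (ops D (Tl r) f)]
    congr 1
    congr 1
    exact D_comm_ops D hD (r + 2) ht (Tl r)
      (fun i hi => ⟨by have := mem_Tl hi; omega, Or.inr (by have := mem_Tl hi; omega)⟩) f

lemma C1 (k m : ℕ) (hm : m + 1 < n) (hk : k < m) (f : P n) :
    D k (ops D (Tl m) f) = ops D (Tl m) (D (k + 1) f) := by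
  induction m generalizing f with
  | zero => omega
  | succ t ih =>
    by_cases hkt : k < t
    · have hfar : Far k (t + 1) := Or.inl (by omega)
      rw [Tl_succ, ops_cons_apply, ops_cons_apply,
        B1 D hD k (t + 1) (by omega) hm hfar, ih (by omega) hkt]
    · have hkt' : k = t := by omega
      subst hkt'
      exact C1_diag D hD k hm f

lemma opsT_kill (m : ℕ) (hm : m + 1 < n) (j : ℕ) (hj : j ≤ m) (f : P n) :
    ops D (Tl m) (ops D (Tl j) f) = 0 := by
  induction j generalizing f with
  | zero =>
    have h0 : Tl m = (List.map Nat.succ (List.range m)).reverse ++ [0] := by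
      rw [Tl, List.range_succ_eq_map, List.reverse_cons', List.concat_eq_append]
    rw [show Tl 0 = [0] from rfl, ops_cons_apply, ops_nil, LinearMap.id_apply, h0,
      ops_append_apply, show ops D [0] (D 0 f) = D 0 (D 0 f) from rfl,
      D_D D hD 0 (by omega), map_zero]
  | succ r ih =>
    rw [Tl_succ, ops_cons_apply, ← C1 D hD r m hm (by omega), ih (by omega), map_zero]

lemma W_kill_diag (t : ℕ) (ht : t + 1 < n) (f : P n) :
    D t (ops D (Wl (t + 1)) f) = 0 := by
  cases t with
  | zero =>
    rw [show Wl 1 = [0] from rfl, ops_cons_apply, ops_nil, LinearMap.id_apply]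
    exact D_D D hD 0 ht f
  | succ r =>
    rw [Wl_succ, Wl_succ, ops_append_apply, ops_append_apply,
      D_comm_ops D hD (r + 1) ht (Wl r)
        (fun i hi => ⟨by have := mem_Wl hi; omega, Or.inr (by have := mem_Wl hi; omega)⟩)]
    rw [← ops_cons_apply D (r + 1) (Tl r), ← Tl_succ,
      opsT_kill D hD (r + 1) ht (r + 1) le_rfl, map_zero]

lemma W_kill (t : ℕ) (ht : t < n) (k : ℕ) (hk : k < t) (f : P n) :
    D k (ops D (Wl t) f) = 0 := by
  induction t generalizing f with
  | zero => omega
  | succ t ih =>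
    by_cases hkt : k < t
    · rw [Wl_succ, ops_append_apply]
      exact ih (by omega) hkt _
    · have hkt' : k = t := by omega
      subst hkt'
      exact W_kill_diag D hD k ht f

/-- partial staircase -/
def St (t : ℕ) : P n := ∏ i : Fin n, X i ^ (t - (i : ℕ))

/-- intermediate monomials within a block -/
def Mst (t j : ℕ) : P n :=
  ∏ i : Fin n, X i ^ (if (i : ℕ) < j then t - (i : ℕ) else t + 1 - (i : ℕ))

omit hD

lemma Mst_zero (t : ℕ) : Mst t 0 = (St (t + 1) : P n) := by
  unfold Mst St
  refine Finset.prod_congr rfl fun i _ => by norm_num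

lemma Mst_last (t : ℕ) : Mst t (t + 1) = (St t : P n) := by
  unfold Mst St
  refine Finset.prod_congr rfl fun i _ => ?_
  congr 1
  split_ifs <;> omega

lemma Mst_factor (t j : ℕ) (hj : j ≤ t) (hjn : j < n) :
    Mst t j = X (⟨j, hjn⟩ : Fin n) * Mst t (j + 1) := by
  unfold Mst
  have step : ∀ i : Fin n,
      (X i : P n) ^ (if (i : ℕ) < j then t - (i : ℕ) else t + 1 - (i : ℕ))
        = X i ^ (if (i : ℕ) < j + 1 then t - (i : ℕ) else t + 1 - (i : ℕ)) *
          X i ^ (if i = (⟨j, hjn⟩ : Fin n) then 1 else 0) := by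
    intro i
    rw [← pow_add]
    congr 1
    have : (i = (⟨j, hjn⟩ : Fin n)) ↔ ((i : ℕ) = j) := by
      simp [Fin.ext_iff]
    by_cases hij : (i : ℕ) = j
    · simp only [this, if_pos hij]
      split_ifs <;> omega
    · simp only [this, if_neg hij]
      split_ifs <;> omega
  rw [Finset.prod_congr rfl fun i _ => step i, Finset.prod_mul_distrib]
  rw [mul_comm]
  congr 1
  rw [Finset.prod_congr rfl (g := fun i => if i = (⟨j, hjn⟩ : Fin n) then X i else 1)
    (fun i _ => by by_cases h : i = (⟨j, hjn⟩ : Fin n) <;> simp [h])]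
  simp

lemma sw_Mst (t j : ℕ) (hj : j ≤ t) (hjn : j + 1 < n) :
    sw j hjn (Mst t (j + 1)) = Mst t (j + 1) := by
  unfold Mst sw
  rw [map_prod]
  have step : ∀ i : Fin n,
      rename (⇑(Equiv.swap (⟨j, Nat.lt_of_succ_lt hjn⟩ : Fin n) ⟨j + 1, hjn⟩))
        ((X i : P n) ^ (if (i : ℕ) < j + 1 then t - (i : ℕ) else t + 1 - (i : ℕ)))
      = X (Equiv.swap (⟨j, Nat.lt_of_succ_lt hjn⟩ : Fin n) ⟨j + 1, hjn⟩ i) ^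
          (if (i : ℕ) < j + 1 then t - (i : ℕ) else t + 1 - (i : ℕ)) := by
    intro i; rw [map_pow, rename_X]
  rw [Finset.prod_congr rfl fun i _ => step i]
  rw [← Equiv.prod_comp (Equiv.swap (⟨j, Nat.lt_of_succ_lt hjn⟩ : Fin n) ⟨j + 1, hjn⟩)
    (fun i => (X i : P n) ^ (if (i : ℕ) < j + 1 then t - (i : ℕ) else t + 1 - (i : ℕ)))]
  refine Finset.prod_congr rfl fun i _ => ?_
  congr 1
  set a : Fin n := ⟨j, Nat.lt_of_succ_lt hjn⟩ with ha
  set b : Fin n := ⟨j + 1, hjn⟩ with hb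
  by_cases hia : i = a
  · subst hia
    rw [Equiv.swap_apply_left, ha, hb]
    simp only [Fin.val_mk]
    split_ifs <;> omega
  · by_cases hib : i = b
    · subst hib
      rw [Equiv.swap_apply_right, ha, hb]
      simp only [Fin.val_mk]
      split_ifs <;> omega
    · rw [Equiv.swap_apply_of_ne_of_ne hia hib]

include hD

lemma D_Mst (t j : ℕ) (hj : j ≤ t) (hjn : j + 1 < n) :
    D j (Mst t j) = Mst t (j + 1) := by
  apply dd_eq D hD j hjn
  have h1 := Mst_factor t j hj (Nat.lt_of_succ_lt hjn)
  have h2 := sw_Mst t j hj hjn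
  have h3 : sw j hjn (Mst t j) = X (⟨j + 1, hjn⟩ : Fin n) * Mst t (j + 1) := by
    rw [h1, sw_mul, h2, sw_X_left]
  rw [h3, h1]
  ring

lemma block_Mst (t : ℕ) (ht : t + 1 < n) (d j : ℕ) (hd : j + d = t + 1) :
    ops D ((List.range' j d).reverse) (Mst t j) = Mst t (t + 1) := by
  induction d generalizing j with
  | zero =>
    have : j = t + 1 := by omega
    subst this; rfl
  | succ e ih =>
    rw [List.range'_succ, List.reverse_cons, ops_append_apply,
      show ops D [j] (Mst t j) = D j (Mst t j) from rfl,
      D_Mst D hD t j (by omega) (by omega), ih (j + 1) (by omega)]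

lemma block_St (t : ℕ) (ht : t + 1 < n) :
    ops D (Tl t) (St (t + 1)) = (St t : P n) := by
  have h0 : Tl t = (List.range' 0 (t + 1)).reverse := by
    rw [Tl, List.range_eq_range']
  rw [h0, ← Mst_zero t, block_Mst D hD t ht (t + 1) 0 (by omega), Mst_last t]

lemma W_St (t : ℕ) (ht : t < n) : ops D (Wl t) (St t) = (1 : P n) := by
  induction t with
  | zero =>
    rw [show Wl 0 = [] from rfl, ops_nil, LinearMap.id_apply]
    unfold St
    simp
  | succ t ih =>
    rw [Wl_succ, ops_append_apply, block_St D hD t ht, ih (by omega)]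

lemma ops_mul_symm (L : List ℕ) (hL : ∀ i ∈ L, i + 1 < n) (g : P n)
    (hg : ∀ (i : ℕ) (h : i + 1 < n), sw i h g = g) (f : P n) :
    ops D L (g * f) = g * ops D L f := by
  induction L generalizing f with
  | nil => rfl
  | cons a L ih =>
    rw [ops_cons_apply, ops_cons_apply, ih (fun i hi => hL i (List.mem_cons_of_mem a hi)),
      D_mul_symm D hD a (hL a List.mem_cons_self) g _ (hg a _)]

end DDAux





/-- ∂(n) ∘ e_n = ∂(n), i.e. ∂(n)(x_1^{n-1}⋯x_{n-1}·∂(n)(f)) = ∂(n)(f). -/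
theorem longOp_comp_en {n : ℕ} (hn : 1 ≤ n)
    (D : ℕ → MvPolynomial (Fin n) ℤ →ₗ[ℤ] MvPolynomial (Fin n) ℤ) (hD : IsDDiff D) :
    ∀ f : MvPolynomial (Fin n) ℤ,
      longOp D (staircase n * longOp D f) = longOp D f := by
  intro f
  rw [DDAux.longOp_eq, DDAux.nilWord_eq_Wl]
  set g := DDAux.ops D (DDAux.Wl (n - 1)) f with hg
  have hsym : ∀ (i : ℕ) (h : i + 1 < n), DDAux.sw i h g = g := by
    intro i h
    have hDk : D i g = 0 := DDAux.W_kill D hD (n - 1) (by omega) i (by omega) f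
    have hrel := DDAux.dd_rel D hD i h g
    rw [hDk, mul_zero] at hrel
    exact (sub_eq_zero.mp hrel.symm).symm
  have hst : staircase n = DDAux.St (n - 1) := rfl
  have hb : ∀ i ∈ DDAux.Wl (n - 1), i + 1 < n := fun i hi => by
    have := DDAux.mem_Wl hi; omega
  calc DDAux.ops D (DDAux.Wl (n - 1)) (staircase n * g)
      = DDAux.ops D (DDAux.Wl (n - 1)) (g * DDAux.St (n - 1)) := by rw [hst, mul_comm]
    _ = g * DDAux.ops D (DDAux.Wl (n - 1)) (DDAux.St (n - 1)) :=
        DDAux.ops_mul_symm D hD _ hb g hsym _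
    _ = g * 1 := by rw [DDAux.W_St D hD (n - 1) (by omega)]
    _ = g := mul_one g
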